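/- Let ρ : S² → ℝ be continuous and suppose there exist nonparallel unit vectors e, ē ∈ S² and continuous functions f, g : [−1,1] → ℝ with ρ(p) = f(p·e) = g(p·ē) for all p ∈ S². Then ρ is constant. -/

import Mathlib

open RealInnerProductSpace

lemma exists_unit_orth (e ebar : EuclideanSpace ℝ (Fin 3)) :
    ∃ w : EuclideanSpace ℝ (Fin 3), ‖w‖ = 1 ∧ ⟪e, w⟫ = 0 ∧ ⟪ebar, w⟫ = 0 := by
  classical
  set K : Submodule ℝ (EuclideanSpace ℝ (Fin 3)) := Submodule.span ℝ {e, ebar} with hK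
  have hKle : Module.finrank ℝ K ≤ 2 := by
    refine (finrank_span_le_card ({e, ebar} : Set (EuclideanSpace ℝ (Fin 3)))).trans ?_
    simp [Set.toFinset_insert]
    exact Finset.card_insert_le _ _ |>.trans (by simp)
  have horth : Module.finrank ℝ K + Module.finrank ℝ Kᗮ = 3 := by
    rw [Submodule.finrank_add_finrank_orthogonal]
    simp [finrank_euclideanSpace]
  have hpos : 0 < Module.finrank ℝ Kᗮ := by omega
  obtain ⟨v, hv, hv0⟩ := Submodule.exists_mem_ne_zero_of_ne_bot (p := Kᗮ) (by intro h; rw [h] at hpos; simp at hpos)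
  refine ⟨‖v‖⁻¹ • v, ?_, ?_, ?_⟩
  · simp [norm_smul, abs_of_nonneg, inv_mul_cancel₀ (norm_ne_zero_iff.mpr hv0)]
  · rw [inner_smul_right]
    have := (Submodule.mem_orthogonal K v).mp hv e (Submodule.subset_span (by simp))
    simp [this]
  · rw [inner_smul_right]
    have := (Submodule.mem_orthogonal K v).mp hv ebar (Submodule.subset_span (by simp))
    simp [this]

lemma sphere_point (e ebar w : EuclideanSpace ℝ (Fin 3)) (he : ‖e‖ = 1) (hw : ‖w‖ = 1)
    (hew : ⟪e, w⟫ = 0) (hebw : ⟪ebar, w⟫ = 0) (t : ℝ) (ht : t ∈ Set.Icc (-1 : ℝ) 1) :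
    ∃ p ∈ Metric.sphere (0 : EuclideanSpace ℝ (Fin 3)) 1,
      ⟪p, e⟫ = t ∧ ⟪p, ebar⟫ = t * ⟪e, ebar⟫ := by
  obtain ⟨ht1, ht2⟩ := ht
  have h1t : (0:ℝ) ≤ 1 - t^2 := by nlinarith
  set s := Real.sqrt (1 - t^2) with hs
  refine ⟨t • e + s • w, ?_, ?_, ?_⟩
  · rw [mem_sphere_zero_iff_norm]
    have hsq : ‖t • e + s • w‖^2 = 1 := by
      rw [← real_inner_self_eq_norm_sq]
      simp only [inner_add_add_self, inner_smul_left, inner_smul_right,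
        real_inner_self_eq_norm_sq, he, hw, conj_trivial]
      have hX : (inner ℝ w e : ℝ) = 0 := by rw [real_inner_comm]; exact hew
      rw [hX]
      simp only [hew]
      have : s^2 = 1 - t^2 := Real.sq_sqrt h1t
      nlinarith
    nlinarith [norm_nonneg (t • e + s • w), sq_nonneg (‖t • e + s • w‖ - 1)]
  · rw [inner_add_left, inner_smul_left, inner_smul_left, real_inner_comm e w, hew,
      real_inner_self_eq_norm_sq, he]
    simp
  · rw [inner_add_left, inner_smul_left, inner_smul_left, real_inner_comm ebar w, hebw]
    simp

/-- A continuous density on the sphere axisymmetric about two nonparallel axes is constant. -/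
theorem axisym_two_axes_const (ρ : EuclideanSpace ℝ (Fin 3) → ℝ)
    (hρ : ContinuousOn ρ (Metric.sphere 0 1))
    (e ebar : EuclideanSpace ℝ (Fin 3)) (he : ‖e‖ = 1) (hebar : ‖ebar‖ = 1)
    (hne : e ≠ ebar) (hne' : e ≠ -ebar)
    (f g : ℝ → ℝ) (hf : ContinuousOn f (Set.Icc (-1) 1)) (hg : ContinuousOn g (Set.Icc (-1) 1))
    (hfe : ∀ p ∈ Metric.sphere (0 : EuclideanSpace ℝ (Fin 3)) 1, ρ p = f (inner ℝ p e))
    (hge : ∀ p ∈ Metric.sphere (0 : EuclideanSpace ℝ (Fin 3)) 1, ρ p = g (inner ℝ p ebar)) :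
    ∀ p ∈ Metric.sphere (0 : EuclideanSpace ℝ (Fin 3)) 1,
      ∀ q ∈ Metric.sphere (0 : EuclideanSpace ℝ (Fin 3)) 1, ρ p = ρ q := by
  set c : ℝ := ⟪e, ebar⟫ with hc
  have hclt : c < 1 := (inner_lt_one_iff_real_of_norm_eq_one he hebar).mpr hne
  have hcgt : -1 < c := by
    have h2 : ⟪e, -ebar⟫ < 1 :=
      (inner_lt_one_iff_real_of_norm_eq_one he (by simpa using hebar)).mpr hne'
    rw [inner_neg_right] at h2
    linarith
  have hcabs : |c| < 1 := abs_lt.mpr ⟨hcgt, hclt⟩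
  obtain ⟨w, hw, hew, hebw⟩ := exists_unit_orth e ebar
  -- f t = g (t * c) on Icc
  have hA : ∀ t ∈ Set.Icc (-1:ℝ) 1, f t = g (t * c) := by
    intro t ht
    obtain ⟨p, hp, hp1, hp2⟩ := sphere_point e ebar w he hw hew hebw t ht
    rw [← hp1, ← hc] at *
    rw [← hfe p hp, hge p hp, hp2, hp1]
  have hB : ∀ s ∈ Set.Icc (-1:ℝ) 1, g s = f (s * c) := by
    intro s hs
    obtain ⟨p, hp, hp1, hp2⟩ := sphere_point ebar e w hebar hw hebw hew s hs
    have : ⟪ebar, e⟫ = c := by rw [hc, real_inner_comm]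
    rw [this] at hp2
    conv_lhs => rw [← hp1]
    rw [← hge p hp, hfe p hp, hp2]
  have hmem : ∀ t ∈ Set.Icc (-1:ℝ) 1, t * c ∈ Set.Icc (-1:ℝ) 1 := by
    intro t ht
    rw [Set.mem_Icc, ← abs_le] at *
    calc |t * c| = |t| * |c| := abs_mul t c
    _ ≤ 1 * 1 := by
        exact mul_le_mul ht hcabs.le (abs_nonneg c) zero_le_one
    _ = 1 := by ring
  have hC : ∀ t ∈ Set.Icc (-1:ℝ) 1, f t = f (t * (c^2)) := by
    intro t ht
    rw [hA t ht, hB (t * c) (hmem t ht)]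
    ring_nf
  have hE : ∀ t ∈ Set.Icc (-1:ℝ) 1, ∀ n : ℕ, t * (c^2)^n ∈ Set.Icc (-1:ℝ) 1 := by
    intro t ht n
    induction n with
    | zero => simpa using ht
    | succ m ihm =>
      have h2 := hmem _ (hmem _ ihm)
      have heq : t * (c^2)^m * c * c = t * (c^2)^(m+1) := by ring
      rwa [heq] at h2
  have hD : ∀ t ∈ Set.Icc (-1:ℝ) 1, ∀ n : ℕ, f t = f (t * (c^2)^n) := by
    intro t ht n
    induction n with
    | zero => simp
    | succ n ih =>
      rw [ih, hC _ (hE t ht n)]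
      ring_nf
  -- limit argument: f t = f 0
  have hf0 : ∀ t ∈ Set.Icc (-1:ℝ) 1, f t = f 0 := by
    intro t ht
    have hseqmem : ∀ n : ℕ, t * (c^2)^n ∈ Set.Icc (-1:ℝ) 1 := hE t ht
    have hlim : Filter.Tendsto (fun n : ℕ => t * (c^2)^n) Filter.atTop (nhds 0) := by
      have h1 : Filter.Tendsto (fun n : ℕ => (c^2)^n) Filter.atTop (nhds 0) := by
        apply tendsto_pow_atTop_nhds_zero_of_abs_lt_one
        rw [abs_of_nonneg (sq_nonneg c)]
        nlinarith [abs_nonneg c, abs_lt.mp hcabs]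
      have := h1.const_mul t
      simpa using this
    have hlim' : Filter.Tendsto (fun n : ℕ => t * (c^2)^n) Filter.atTop
        (nhdsWithin 0 (Set.Icc (-1:ℝ) 1)) := by
      rw [tendsto_nhdsWithin_iff]
      exact ⟨hlim, Filter.Eventually.of_forall hseqmem⟩
    have hcont : Filter.Tendsto (fun n : ℕ => f (t * (c^2)^n)) Filter.atTop (nhds (f 0)) :=
      (hf.continuousWithinAt (by simp)).tendsto.comp hlim'
    have hconst : Filter.Tendsto (fun n : ℕ => f (t * (c^2)^n)) Filter.atTop (nhds (f t)) := by
      have : (fun n : ℕ => f (t * (c^2)^n)) = fun _ => f t := by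
        funext n; exact (hD t ht n).symm
      rw [this]; exact tendsto_const_nhds
    exact tendsto_nhds_unique hconst hcont
  intro p hp q hq
  have hip : (⟪p, e⟫ : ℝ) ∈ Set.Icc (-1:ℝ) 1 := by
    rw [Set.mem_Icc, ← abs_le]
    have := abs_real_inner_le_norm p e
    rwa [mem_sphere_zero_iff_norm.mp hp, he, one_mul] at this
  have hiq : (⟪q, e⟫ : ℝ) ∈ Set.Icc (-1:ℝ) 1 := by
    rw [Set.mem_Icc, ← abs_le]
    have := abs_real_inner_le_norm q e
    rwa [mem_sphere_zero_iff_norm.mp hq, he, one_mul] at this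
  rw [hfe p hp, hfe q hq, hf0 _ hip, hf0 _ hiq]
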